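/- Correctness of the FS payload (retrieve_fses recovers the inserted forwarding segments): let s, s_0, …, s_{l−1} ∈ {0,1}^k be keys and FS_0, …, FS_{l−1} ∈ {0,1}^{|FS|} forwarding segments. Define P_0 = init_fs_payload(s) and P_{i+1} = add_fs(s_i, FS_i, P_i) for 0 ≤ i ≤ l−1 (node i inserts its FS). Then, when the retrieve_fses procedure is executed on input P_l with initialization key s and keys s_0, …, s_{l−1}: every MAC check in the loop succeeds (at the iteration with index i, the first k bits of the current P_full equal MAC(h_MAC(s_i); (P_full)_[k..rc−1])), and the extracted segments satisfy FS'_i = FS_i for every 0 ≤ i ≤ l−1; that is, the source recovers exactly the forwarding segments inserted by the nodes, in the reverse of the order in which they were added. -/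

import Mathlib

/-- Bit strings: finite sequences of bits. -/
abbrev BS : Type := List Bool

/-- Bitwise XOR of (equal-length) bit strings. -/
def bxor (σ τ : BS) : BS := List.zipWith xor σ τ

/-- Substring from bit position `a` through `b` inclusive (0-indexed). -/
def substr (σ : BS) (a b : ℕ) : BS := (σ.drop a).take (b + 1 - a)

/-- All-zero string of length `a`. -/
def zeros (a : ℕ) : BS := List.replicate a false

lemma length_bxor (a b : BS) : (bxor a b).length = min a.length b.length := by
  simp [bxor]

lemma length_zeros (n : ℕ) : (zeros n).length = n := by simp [zeros]

lemma length_substr (σ : BS) (a b : ℕ) :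
    (substr σ a b).length = min (b + 1 - a) (σ.length - a) := by
  simp [substr]

lemma bxor_zeros (a : BS) (n : ℕ) (h : a.length ≤ n) : bxor a (zeros n) = a := by
  induction a generalizing n with
  | nil => simp [bxor]
  | cons x xs ih =>
    cases n with
    | zero => simp at h
    | succ m =>
      simp only [zeros, List.replicate_succ, bxor, List.zipWith_cons_cons, Bool.xor_false]
      exact congrArg _ (ih m (by simpa using h))

lemma bxor_cancel (a b : BS) (h : a.length ≤ b.length) : bxor (bxor a b) b = a := by
  induction a generalizing b with
  | nil => simp [bxor]
  | cons x xs ih =>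
    cases b with
    | nil => simp at h
    | cons y ys =>
      simp only [bxor, List.zipWith_cons_cons]
      refine congrArg₂ _ (by cases x <;> cases y <;> rfl) (ih ys (by simpa using h))

lemma bxor_take_left (a b : BS) : bxor (a.take b.length) b = bxor a b := by
  induction a generalizing b with
  | nil => simp
  | cons x xs ih =>
    cases b with
    | nil => simp [bxor]
    | cons y ys =>
      simp only [bxor, List.length_cons, List.take_succ_cons, List.zipWith_cons_cons]
      exact congrArg _ (ih ys)

lemma drop_bxor (n : ℕ) (a b : BS) : (bxor a b).drop n = bxor (a.drop n) (b.drop n) :=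
  List.drop_zipWith

lemma take_bxor (n : ℕ) (a b : BS) : (bxor a b).take n = bxor (a.take n) (b.take n) :=
  List.take_zipWith

lemma bxor_append (a b x y : BS) (h : a.length = x.length) :
    bxor (a ++ b) (x ++ y) = bxor a x ++ bxor b y :=
  List.zipWith_append h

def Wseq (k c rc : ℕ) (G : ℕ → BS) (T : ℕ → BS → BS) (FS : ℕ → BS) (I : BS) : ℕ → BS
  | 0 => I
  | (j+1) =>
      T j ((bxor (FS j ++ Wseq k c rc G T FS I j)
              (substr (G j) k (rc - 1) ++ zeros ((j+1)*c))).take (rc - k))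
        ++ bxor (FS j ++ Wseq k c rc G T FS I j)
            (substr (G j) k (rc - 1) ++ zeros ((j+1)*c))

/-- Correctness of the FS payload: when `retrieve_fses`
(Algorithm 2) is executed on the payload `P l` obtained by successive
`add_fs` insertions, every MAC check in the loop succeeds and the extracted
segments equal the inserted forwarding segments (in reverse order of
insertion): at iteration `t` (processing index `i = l - 1 - t`), the first `k`
bits of the current `P_full` equal `MAC(h_MAC(s_i); (P_full)_[k..rc−1])` and
the extracted segment equals `FS i`. -/
theorem retrieve_fses_correctness
    (k fsl r l : ℕ) (hk : 1 ≤ k) (hfsl : k ≤ fsl) (hr : 1 ≤ r)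
    (hl1 : 1 ≤ l) (hlr : l ≤ r)
    (c : ℕ) (hc : c = fsl + k)
    (PRG0 PRG1 : BS → BS)
    (hPRG0len : ∀ x, (PRG0 x).length = r * c)
    (hPRG1len : ∀ x, (PRG1 x).length = r * c)
    (MAC : BS → BS → BS) (hMAClen : ∀ key msg, (MAC key msg).length = k)
    (hPRG0 hPRG1 hMAC : BS → BS)
    (hhPRG0len : ∀ x, (hPRG0 x).length = k)
    (hhPRG1len : ∀ x, (hPRG1 x).length = k)
    (hhMAClen : ∀ x, (hMAC x).length = k)
    -- the initialization key and the per-node keys and forwarding segments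
    (s : BS) (hslen : s.length = k)
    (sk FS : ℕ → BS)
    (hsk : ∀ i, i < l → (sk i).length = k)
    (hFS : ∀ i, i < l → (FS i).length = fsl)
    -- init_fs_payload and add_fs
    (initFsPayload : BS → BS)
    (hinit : ∀ x, initFsPayload x = PRG1 (hPRG1 x))
    (addFs : BS → BS → BS → BS)
    (haddFs : ∀ key F P, addFs key F P =
      MAC (hMAC key)
          (bxor (F ++ substr P 0 ((r - 1) * c - 1)) (substr (PRG0 (hPRG0 key)) k (r * c - 1)))
        ++ bxor (F ++ substr P 0 ((r - 1) * c - 1)) (substr (PRG0 (hPRG0 key)) k (r * c - 1)))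
    -- the insertion process: node i inserts FS i
    (P : ℕ → BS)
    (hP0 : P 0 = initFsPayload s)
    (hPstep : ∀ i, i < l → P (i + 1) = addFs (sk i) (FS i) (P i))
    -- the padding string ψ computed by retrieve_fses
    (ψ : BS)
    (hψ : ψ = (List.range (l - 1)).foldl
      (fun acc j =>
        bxor acc (substr (PRG0 (hPRG0 (sk j))) ((r - l + 1 + j) * c) (r * c - 1)
          ++ zeros ((j + 1) * c)))
      (substr (initFsPayload s) ((r - l) * c) (r * c - 1)))
    -- the loop states of retrieve_fses: V t is P_full before iteration t,
    -- which processes index i = l - 1 - t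
    (V : ℕ → BS)
    (hV0 : V 0 = P l ++ ψ)
    (hVstep : ∀ t, t < l → V (t + 1) =
      (bxor (V t) (PRG0 (hPRG0 (sk (l - 1 - t))) ++ zeros ((l - 1 - t + 1) * c))).drop c) :
    ∀ t, t < l →
      (substr (V t) 0 (k - 1)
        = MAC (hMAC (sk (l - 1 - t))) (substr (V t) k (r * c - 1))) ∧
      (substr (bxor (V t) (PRG0 (hPRG0 (sk (l - 1 - t))) ++ zeros ((l - 1 - t + 1) * c)))
          k (c - 1) = FS (l - 1 - t)) := by
  -- abbreviations
  set W : ℕ → BS := Wseq k c (r*c) (fun j => PRG0 (hPRG0 (sk j)))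
      (fun j m => MAC (hMAC (sk j)) m) FS (initFsPayload s) with hWdef
  set B : ℕ → BS := fun j => bxor (FS j ++ W j)
      (substr (PRG0 (hPRG0 (sk j))) k (r*c - 1) ++ zeros ((j+1)*c)) with hBdef
  have hWsucc : ∀ j, W (j+1) =
      MAC (hMAC (sk j)) ((B j).take (r*c - k)) ++ B j := fun j => rfl
  -- numeric facts
  have hc1 : 1 ≤ c := by omega
  have hkc : k < c := by omega
  have hcrc : c ≤ r * c := Nat.le_mul_of_pos_left c hr
  have hclc : c ≤ l * c := Nat.le_mul_of_pos_left c hl1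
  have hrc1 : 1 ≤ r * c := le_trans hc1 hcrc
  have hr1c : (r - 1) * c = r * c - c := by rw [Nat.sub_mul, one_mul]
  have hl1c : (l - 1) * c = l * c - c := by rw [Nat.sub_mul, one_mul]
  -- length facts
  have hGlen : ∀ j, (PRG0 (hPRG0 (sk j))).length = r * c := fun j => hPRG0len _
  have hSlen : ∀ j, (substr (PRG0 (hPRG0 (sk j))) k (r*c - 1)).length = r*c - k := by
    intro j; rw [length_substr, hGlen]; omega
  have hsubG : ∀ j, substr (PRG0 (hPRG0 (sk j))) k (r*c - 1) = (PRG0 (hPRG0 (sk j))).drop k := by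
    intro j
    apply List.take_of_length_le
    rw [List.length_drop, hGlen]; omega
  have hIlen : (initFsPayload s).length = r * c := by rw [hinit]; exact hPRG1len _
  have hW0 : W 0 = initFsPayload s := rfl
  have hWlen : ∀ j, j ≤ l → (W j).length = r*c + j*c := by
    intro j
    induction j with
    | zero => intro _; simpa [hW0] using hIlen
    | succ j ih =>
      intro hj
      have hb : (B j).length = r*c + j*c + fsl := by
        rw [hBdef]
        simp only []
        rw [length_bxor, List.length_append, List.length_append, hSlen, length_zeros,
          hFS j (by omega), ih (by omega), Nat.succ_mul]
        omega
      rw [hWsucc j, List.length_append, hMAClen, hb, Nat.succ_mul]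
      omega
  have hBlen : ∀ j, j < l → (B j).length = r*c + j*c + fsl := by
    intro j hj
    rw [hBdef]
    simp only []
    rw [length_bxor, List.length_append, List.length_append, hSlen, length_zeros,
      hFS j (by omega), hWlen j (by omega), Nat.succ_mul]
    omega
  -- mask cancellation
  have hmask : ∀ j, j < l →
      bxor (W (j+1)) (PRG0 (hPRG0 (sk j)) ++ zeros ((j+1)*c))
        = bxor (MAC (hMAC (sk j)) ((B j).take (r*c - k))) ((PRG0 (hPRG0 (sk j))).take k)
          ++ (FS j ++ W j) := by
    intro j hj
    rw [hWsucc j]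
    have hsplit : PRG0 (hPRG0 (sk j)) ++ zeros ((j+1)*c)
        = (PRG0 (hPRG0 (sk j))).take k
          ++ ((PRG0 (hPRG0 (sk j))).drop k ++ zeros ((j+1)*c)) := by
      rw [← List.append_assoc, List.take_append_drop]
    rw [hsplit, bxor_append _ _ _ _ (by
      rw [hMAClen, List.length_take, hGlen]; omega)]
    congr 1
    rw [← hsubG j]
    have := bxor_cancel (FS j ++ W j)
      (substr (PRG0 (hPRG0 (sk j))) k (r*c - 1) ++ zeros ((j+1)*c))
      (by
        rw [List.length_append, List.length_append, hSlen, length_zeros,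
          hFS j hj, hWlen j (by omega), Nat.succ_mul]
        omega)
    rw [hBdef]
    exact this
  have hmaskhd : ∀ j, j < l →
      (bxor (MAC (hMAC (sk j)) ((B j).take (r*c - k))) ((PRG0 (hPRG0 (sk j))).take k)).length
        = k := by
    intro j hj
    rw [length_bxor, hMAClen, List.length_take, hGlen]
    omega
  -- step: dropping c recovers W j
  have hdropc : ∀ j, j < l →
      (bxor (W (j+1)) (PRG0 (hPRG0 (sk j)) ++ zeros ((j+1)*c))).drop c = W j := by
    intro j hj
    rw [hmask j hj, ← List.append_assoc]
    apply List.drop_left'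
    rw [List.length_append, hmaskhd j hj, hFS j hj]
    omega
  -- extraction of FS j
  have hextract : ∀ j, j < l →
      substr (bxor (W (j+1)) (PRG0 (hPRG0 (sk j)) ++ zeros ((j+1)*c))) k (c-1) = FS j := by
    intro j hj
    rw [hmask j hj]
    rw [substr, List.drop_left' (hmaskhd j hj)]
    have : c - 1 + 1 - k = fsl := by omega
    rw [this]
    exact List.take_left' (hFS j hj)
  -- MAC check on W (j+1)
  have hmac : ∀ j, j < l →
      substr (W (j+1)) 0 (k-1)
        = MAC (hMAC (sk j)) (substr (W (j+1)) k (r*c - 1)) := by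
    intro j hj
    have h2 : substr (W (j+1)) k (r*c - 1) = (B j).take (r*c - k) := by
      rw [hWsucc j, substr, List.drop_left' (hMAClen _ _)]
      congr 1
      omega
    rw [h2, hWsucc j, substr, List.drop_zero]
    have : k - 1 + 1 = k := by omega
    rw [this]
    exact List.take_left' (hMAClen _ _)
  -- P j is the truncation of W j
  have hP : ∀ j, j ≤ l → P j = (W j).take (r*c) := by
    intro j
    induction j with
    | zero =>
      intro _
      rw [hP0, hW0, List.take_of_length_le (le_of_eq hIlen)]
    | succ j ih =>
      intro hj
      rw [hPstep j (by omega), haddFs]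
      have hQ : bxor (FS j ++ substr (P j) 0 ((r - 1) * c - 1))
            (substr (PRG0 (hPRG0 (sk j))) k (r * c - 1))
          = (B j).take (r*c - k) := by
        have htake2 : ((B j).take (r*c - k))
            = bxor (FS j ++ (W j).take (r*c - c))
              (substr (PRG0 (hPRG0 (sk j))) k (r*c - 1)) := by
          rw [hBdef]
          simp only []
          rw [take_bxor]
          congr 1
          · rw [List.take_append,
              List.take_of_length_le (by rw [hFS j (by omega)]; omega),
              hFS j (by omega)]
            congr 1
            congr 1
            omega
          · rw [List.take_append,
              List.take_of_length_le (le_of_eq (hSlen j)), hSlen j]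
            have : r*c - k - (r*c - k) = 0 := by omega
            rw [this]
            simp
        rw [htake2, ← bxor_take_left (FS j ++ substr (P j) 0 ((r - 1) * c - 1)) _, hSlen j]
        congr 1
        rw [List.take_append,
          List.take_of_length_le (by rw [hFS j (by omega)]; omega), hFS j (by omega)]
        congr 1
        rw [substr, List.drop_zero, List.take_take, ih (by omega), List.take_take]
        congr 1
        omega
      rw [hQ, hWsucc j, List.take_append,
        List.take_of_length_le
          (l := MAC (hMAC (sk j)) ((B j).take (r*c - k))) (i := r*c)
          (by rw [hMAClen]; omega),
        hMAClen]
  -- suffix recurrence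
  have hdropW : ∀ j, j < l →
      (W (j+1)).drop ((r - l + j + 1)*c)
        = bxor ((W j).drop ((r - l + j)*c))
            (substr (PRG0 (hPRG0 (sk j))) ((r - l + 1 + j)*c) (r*c - 1) ++ zeros ((j+1)*c)) := by
    intro j hj
    have ha1 : (r - l + j + 1)*c = (r - l + j)*c + c := by rw [Nat.succ_mul]
    have ha2 : (r - l + j + 1)*c ≤ r*c := Nat.mul_le_mul_right c (by omega)
    have ha3 : (r - l + 1 + j)*c = (r - l + j + 1)*c := by
      congr 1; omega
    have hasub : substr (PRG0 (hPRG0 (sk j))) ((r - l + 1 + j)*c) (r*c - 1)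
        = (PRG0 (hPRG0 (sk j))).drop ((r - l + j + 1)*c) := by
      rw [ha3]
      apply List.take_of_length_le
      rw [List.length_drop, hGlen]
      omega
    rw [hWsucc j, List.drop_append,
      List.drop_eq_nil_of_le (by rw [hMAClen]; omega), List.nil_append, hMAClen,
      hBdef]
    simp only []
    rw [drop_bxor, List.drop_append,
      List.drop_eq_nil_of_le (by rw [hFS j hj]; omega), List.nil_append,
      hFS j hj,
      List.drop_append]
    have he1 : (r - l + j + 1)*c - k - fsl = (r - l + j)*c := by omega
    have he2 : k + ((r - l + j + 1)*c - k) = (r - l + j + 1)*c := by omega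
    have hz : (r - l + j + 1)*c - k - (substr (PRG0 (hPRG0 (sk j))) k (r*c - 1)).length = 0 := by
      rw [hSlen j]; omega
    rw [he1, hz, List.drop_zero]
    congr 1
    congr 1
    rw [hsubG j, List.drop_drop, he2]
    exact hasub.symm
  -- the fold computes suffixes of W
  have hfold : ∀ m, m ≤ l - 1 →
      (W m).drop ((r - l + m)*c)
        = (List.range m).foldl
            (fun acc j =>
              bxor acc (substr (PRG0 (hPRG0 (sk j))) ((r - l + 1 + j) * c) (r * c - 1)
                ++ zeros ((j + 1) * c)))
            (substr (initFsPayload s) ((r - l) * c) (r * c - 1)) := by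
    intro m
    induction m with
    | zero =>
      intro _
      rw [List.range_zero, List.foldl_nil, hW0, substr]
      symm
      apply List.take_of_length_le
      rw [List.length_drop, hIlen]
      have : (r - l)*c ≤ r*c := Nat.mul_le_mul_right c (by omega)
      omega
    | succ m ih =>
      intro hm
      rw [List.range_succ, List.foldl_append, List.foldl_cons, List.foldl_nil,
        ← ih (by omega)]
      have : (r - l + (m + 1))*c = (r - l + m + 1)*c := by congr 1
      rw [this]
      exact hdropW m (by omega)
  -- ψ is the suffix of W l beyond position r*c
  have hψW : (W l).drop (r*c) = ψ := by
    have hll : l - 1 + 1 = l := by omega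
    have h1 := hdropW (l-1) (by omega)
    rw [hll] at h1
    have h2 : (r - l + (l-1) + 1)*c = r*c := by congr 1; omega
    have h3 : substr (PRG0 (hPRG0 (sk (l-1)))) ((r - l + 1 + (l-1))*c) (r*c - 1) = [] := by
      rw [substr]
      have : (r - l + 1 + (l-1))*c = r*c := by congr 1; omega
      rw [this, List.drop_eq_nil_of_le (le_of_eq (hGlen _)), List.take_nil]
    rw [h2, h3, List.nil_append] at h1
    have h5 : ((W (l-1)).drop ((r - l + (l-1))*c)).length ≤ l*c := by
      rw [List.length_drop, hWlen (l-1) (by omega)]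
      have : (r - l + (l-1))*c = (r-1)*c := by congr 1; omega
      rw [this]
      omega
    rw [bxor_zeros _ _ h5] at h1
    rw [h1, hψ]
    exact hfold (l-1) le_rfl
  -- V 0 = W l
  have hV0W : V 0 = W l := by
    rw [hV0, hP l le_rfl, ← hψW, List.take_append_drop]
  -- invariant
  have hVW : ∀ t, t ≤ l → V t = W (l - t) := by
    intro t
    induction t with
    | zero => intro _; simpa using hV0W
    | succ t ih =>
      intro ht
      rw [hVstep t (by omega), ih (by omega)]
      have : l - t = (l - 1 - t) + 1 := by omega
      rw [this, hdropc (l - 1 - t) (by omega)]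
      congr 1
      omega
  -- conclusion
  intro t ht
  have hVt : V t = W ((l - 1 - t) + 1) := by
    rw [hVW t (by omega)]
    congr 1
    omega
  rw [hVt]
  exact ⟨hmac (l - 1 - t) (by omega), hextract (l - 1 - t) (by omega)⟩
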